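/- Let N ≥ 2 and Γ the graded path algebra of the previous context (doubled A_N quiver with extra degree-N arrows yᵢ: i → N+1−i, relations (a)–(d)). Then for all 1 ≤ i, j ≤ N and k ≥ 0, dim_F e_i Γ_k e_j ≤ 1, and it equals 1 only if, writing k = qN + r with 0 ≤ r < N, either q is even and |i−j| ≤ r ≤ N−1−|N+1−i−j| with r ≡ i−j (mod 2), or q is odd and the same condition holds with i replaced by N+1−i. -/

import Mathlib

/-! The graded path algebra `Γ` of the quiver with vertices `1, …, N`, degree-1 arrows
`xᵢ : i → i+1`, `xᵢ* : i+1 → i` and degree-`N` arrows `yᵢ : i → N+1−i`, modulo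
(a) `x₁x₁* = x_{N-1}*x_{N-1} = 0`, (b) `xᵢ*xᵢ = x_{i+1}x_{i+1}*`,
(c) `xᵢ y_{i+1} = yᵢ x_{N-i}*`, (d) `xᵢ* yᵢ = y_{i+1} x_{N-i}`
(concatenation-of-paths convention). -/

/-- A step of a path: `up` is some `x`, `down` is some `x*`, `flip` is some `y`. -/
inductive BStep : Type
  | up : BStep
  | down : BStep
  | flip : BStep
deriving DecidableEq

/-- The endpoint of a single step starting at vertex `v`. -/
def stepNext (N : ℕ) (v : ℤ) : BStep → ℤ
  | BStep.up => v + 1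
  | BStep.down => v - 1
  | BStep.flip => (N : ℤ) + 1 - v

/-- The degree of a step: `x` and `x*` have degree `1`, `y` has degree `N`. -/
def stepDeg (N : ℕ) : BStep → ℕ
  | BStep.up => 1
  | BStep.down => 1
  | BStep.flip => N

/-- All vertices visited lie in `{1, …, N}`. -/
def okStepsY (N : ℕ) : ℤ → List BStep → Prop
  | i, [] => 1 ≤ i ∧ i ≤ (N : ℤ)
  | i, b :: L => 1 ≤ i ∧ i ≤ (N : ℤ) ∧ okStepsY N (stepNext N i b) L

/-- The endpoint of the step list `L` starting at `i`. -/
def targetY (N : ℕ) : ℤ → List BStep → ℤ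
  | i, [] => i
  | i, b :: L => targetY N (stepNext N i b) L

/-- The total degree of a step list. -/
def degY (N : ℕ) (L : List BStep) : ℕ := (L.map (stepDeg N)).sum

/-- `L` encodes a path from `i` to `j` of total degree `k`. -/
def IsPathFromY (N : ℕ) (i j : ℤ) (k : ℕ) (L : List BStep) : Prop :=
  okStepsY N i L ∧ targetY N i L = j ∧ degY N L = k

/-- The set of paths from `i` to `j` of degree `k`. -/
def PathIdxY (N : ℕ) (i j : ℤ) (k : ℕ) : Type :=
  {L : List BStep // IsPathFromY N i j k L}

/-- The relators spanning the degree-`k`, `(i,j)`-component of the ideal generated by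
the relations (a)–(d) inside `e_i (FQ)_k e_j`. -/
def relatorsY (F : Type*) [Field F] (N : ℕ) (i j : ℤ) (k : ℕ) :
    Set (PathIdxY N i j k →₀ F) :=
  {v | ∃ A B : List BStep,
    -- (a) `x₁x₁* = 0`
    (∃ h : IsPathFromY N i j k (A ++ [BStep.up, BStep.down] ++ B),
      targetY N i A = 1 ∧ v = Finsupp.single ⟨A ++ [BStep.up, BStep.down] ++ B, h⟩ 1) ∨
    -- (a) `x_{N-1}*x_{N-1} = 0`
    (∃ h : IsPathFromY N i j k (A ++ [BStep.down, BStep.up] ++ B),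
      targetY N i A = (N : ℤ) ∧
      v = Finsupp.single ⟨A ++ [BStep.down, BStep.up] ++ B, h⟩ 1) ∨
    -- (b) `xᵢ*xᵢ = x_{i+1}x_{i+1}*` at an interior vertex
    (∃ (h1 : IsPathFromY N i j k (A ++ [BStep.down, BStep.up] ++ B))
        (h2 : IsPathFromY N i j k (A ++ [BStep.up, BStep.down] ++ B)),
      2 ≤ targetY N i A ∧ targetY N i A ≤ (N : ℤ) - 1 ∧
      v = Finsupp.single ⟨A ++ [BStep.down, BStep.up] ++ B, h1⟩ 1
          - Finsupp.single ⟨A ++ [BStep.up, BStep.down] ++ B, h2⟩ 1) ∨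
    -- (c) `xᵢ y_{i+1} = yᵢ x_{N-i}*`
    (∃ (h1 : IsPathFromY N i j k (A ++ [BStep.up, BStep.flip] ++ B))
        (h2 : IsPathFromY N i j k (A ++ [BStep.flip, BStep.down] ++ B)),
      1 ≤ targetY N i A ∧ targetY N i A ≤ (N : ℤ) - 1 ∧
      v = Finsupp.single ⟨A ++ [BStep.up, BStep.flip] ++ B, h1⟩ 1
          - Finsupp.single ⟨A ++ [BStep.flip, BStep.down] ++ B, h2⟩ 1) ∨
    -- (d) `xᵢ* yᵢ = y_{i+1} x_{N-i}`
    (∃ (h1 : IsPathFromY N i j k (A ++ [BStep.down, BStep.flip] ++ B))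
        (h2 : IsPathFromY N i j k (A ++ [BStep.flip, BStep.up] ++ B)),
      2 ≤ targetY N i A ∧ targetY N i A ≤ (N : ℤ) ∧
      v = Finsupp.single ⟨A ++ [BStep.down, BStep.flip] ++ B, h1⟩ 1
          - Finsupp.single ⟨A ++ [BStep.flip, BStep.up] ++ B, h2⟩ 1)}

/-- The component `e_i Γ_k e_j` of the quotient graded path algebra `Γ = FQ/⟨I⟩`. -/
def PathCompY (F : Type*) [Field F] (N : ℕ) (i j : ℤ) (k : ℕ) :=
  (PathIdxY N i j k →₀ F) ⧸ Submodule.span F (relatorsY F N i j k)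

noncomputable instance (F : Type*) [Field F] (N : ℕ) (i j : ℤ) (k : ℕ) :
    AddCommGroup (PathCompY F N i j k) :=
  Submodule.Quotient.addCommGroup _

noncomputable instance (F : Type*) [Field F] (N : ℕ) (i j : ℤ) (k : ℕ) :
    Module F (PathCompY F N i j k) :=
  Submodule.Quotient.module _

/-- The class of a path in `e_i Γ_k e_j`. -/
noncomputable def pathClassY (F : Type*) [Field F] {N : ℕ} {i j : ℤ} {k : ℕ}
    (p : PathIdxY N i j k) : PathCompY F N i j k :=
  Submodule.Quotient.mk (Finsupp.single p 1)

/-- Normal form `yᵢᵃ · γ₁ · γ₂`: an optional initial `y`, then a product of `x`'s and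
`x*`'s only, then a loop of `y`'s of degree a multiple of `2N`. -/
def NormalFormY (L : List BStep) : Prop :=
  ∃ (a : Bool) (M : List BStep) (t : ℕ),
    L = (cond a [BStep.flip] []) ++ M ++ List.replicate (2 * t) BStep.flip ∧
      ∀ s ∈ M, s ≠ BStep.flip

open BStep

section Basic

variable {N : ℕ} {i j : ℤ} {k : ℕ}

lemma targetY_append (a : ℤ) (A B : List BStep) :
    targetY N a (A ++ B) = targetY N (targetY N a A) B := by
  induction A generalizing a with
  | nil => rfl
  | cons s A ih => simp [targetY, ih]

lemma okStepsY_bounds {a : ℤ} {L : List BStep} (h : okStepsY N a L) :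
    1 ≤ a ∧ a ≤ (N : ℤ) := by
  cases L with
  | nil => exact h
  | cons s L => exact ⟨h.1, h.2.1⟩

lemma okStepsY_append {a : ℤ} {A B : List BStep} :
    okStepsY N a (A ++ B) ↔ okStepsY N a A ∧ okStepsY N (targetY N a A) B := by
  induction A generalizing a with
  | nil =>
    simp only [List.nil_append, targetY]
    constructor
    · intro h; exact ⟨okStepsY_bounds h, h⟩
    · exact fun h => h.2
  | cons s A ih =>
    show (1 ≤ a ∧ a ≤ (N:ℤ) ∧ okStepsY N _ (A ++ B)) ↔ _
    rw [ih]
    simp only [okStepsY, targetY, and_assoc]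

lemma okStepsY_target {a : ℤ} {L : List BStep} (h : okStepsY N a L) :
    1 ≤ targetY N a L ∧ targetY N a L ≤ (N : ℤ) := by
  induction L generalizing a with
  | nil => exact h
  | cons s L ih => exact ih h.2.2

lemma degY_append (A B : List BStep) : degY N (A ++ B) = degY N A + degY N B := by
  simp [degY]

lemma degY_cons (s : BStep) (L : List BStep) :
    degY N (s :: L) = stepDeg N s + degY N L := by simp [degY]

/-- Transport of path validity across replacement of a middle segment. -/
lemma replace_mid {A B M M' : List BStep} (h : IsPathFromY N i j k (A ++ M ++ B))
    (hok : okStepsY N (targetY N i A) M')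
    (ht : targetY N (targetY N i A) M' = targetY N (targetY N i A) M)
    (hd : degY N M' = degY N M) : IsPathFromY N i j k (A ++ M' ++ B) := by
  obtain ⟨hok0, htar0, hdeg0⟩ := h
  rw [List.append_assoc, okStepsY_append, okStepsY_append] at hok0
  rw [List.append_assoc, targetY_append, targetY_append] at htar0
  rw [List.append_assoc, degY_append, degY_append] at hdeg0
  refine ⟨?_, ?_, ?_⟩
  · rw [List.append_assoc, okStepsY_append, okStepsY_append]
    exact ⟨hok0.1, hok, ht ▸ hok0.2.2⟩
  · rw [List.append_assoc, targetY_append, targetY_append, ht]; exact htar0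
  · rw [List.append_assoc, degY_append, degY_append, hd]; exact hdeg0

end Basic

section Cls

variable {F : Type*} [Field F] {N : ℕ} {i j : ℤ} {k : ℕ}

lemma cls_congr {L1 L2 : List BStep} (e : L1 = L2) (h1 : IsPathFromY N i j k L1)
    (h2 : IsPathFromY N i j k L2) :
    pathClassY F ⟨L1, h1⟩ = pathClassY F ⟨L2, h2⟩ := by subst e; rfl

lemma cls_rel_a1 {A B : List BStep} (hv : targetY N i A = 1)
    (h : IsPathFromY N i j k (A ++ [up, down] ++ B)) :
    pathClassY F ⟨A ++ [up, down] ++ B, h⟩ = 0 := by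
  unfold pathClassY; refine (Submodule.Quotient.mk_eq_zero _).mpr ?_
  exact Submodule.subset_span ⟨A, B, Or.inl ⟨h, hv, rfl⟩⟩

lemma cls_rel_aN {A B : List BStep} (hv : targetY N i A = (N : ℤ))
    (h : IsPathFromY N i j k (A ++ [down, up] ++ B)) :
    pathClassY F ⟨A ++ [down, up] ++ B, h⟩ = 0 := by
  unfold pathClassY; refine (Submodule.Quotient.mk_eq_zero _).mpr ?_
  exact Submodule.subset_span ⟨A, B, Or.inr (Or.inl ⟨h, hv, rfl⟩)⟩

lemma cls_rel_b {A B : List BStep} (hv1 : 2 ≤ targetY N i A)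
    (hv2 : targetY N i A ≤ (N : ℤ) - 1)
    (h1 : IsPathFromY N i j k (A ++ [down, up] ++ B))
    (h2 : IsPathFromY N i j k (A ++ [up, down] ++ B)) :
    pathClassY F ⟨A ++ [down, up] ++ B, h1⟩ = pathClassY F ⟨A ++ [up, down] ++ B, h2⟩ := by
  unfold pathClassY; refine (Submodule.Quotient.eq _).mpr ?_
  exact Submodule.subset_span ⟨A, B, Or.inr (Or.inr (Or.inl ⟨h1, h2, hv1, hv2, rfl⟩))⟩

lemma cls_rel_c {A B : List BStep} (hv1 : 1 ≤ targetY N i A)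
    (hv2 : targetY N i A ≤ (N : ℤ) - 1)
    (h1 : IsPathFromY N i j k (A ++ [up, flip] ++ B))
    (h2 : IsPathFromY N i j k (A ++ [flip, down] ++ B)) :
    pathClassY F ⟨A ++ [up, flip] ++ B, h1⟩ = pathClassY F ⟨A ++ [flip, down] ++ B, h2⟩ := by
  unfold pathClassY; refine (Submodule.Quotient.eq _).mpr ?_
  exact Submodule.subset_span ⟨A, B, Or.inr (Or.inr (Or.inr (Or.inl ⟨h1, h2, hv1, hv2, rfl⟩)))⟩

lemma cls_rel_d {A B : List BStep} (hv1 : 2 ≤ targetY N i A)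
    (hv2 : targetY N i A ≤ (N : ℤ))
    (h1 : IsPathFromY N i j k (A ++ [down, flip] ++ B))
    (h2 : IsPathFromY N i j k (A ++ [flip, up] ++ B)) :
    pathClassY F ⟨A ++ [down, flip] ++ B, h1⟩ = pathClassY F ⟨A ++ [flip, up] ++ B, h2⟩ := by
  unfold pathClassY; refine (Submodule.Quotient.eq _).mpr ?_
  exact Submodule.subset_span ⟨A, B, Or.inr (Or.inr (Or.inr (Or.inr ⟨h1, h2, hv1, hv2, rfl⟩)))⟩

end Cls
section Measures

open BStep

/-- Number of (up, down) inversions. -/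
def invUD : List BStep → ℕ
  | [] => 0
  | up :: L => L.count down + invUD L
  | _ :: L => invUD L

/-- Number of (down, up) inversions. -/
def invDU : List BStep → ℕ
  | [] => 0
  | down :: L => L.count up + invDU L
  | _ :: L => invDU L

/-- Number of (non-BStep.flip, BStep.flip) inversions. -/
def invF : List BStep → ℕ
  | [] => 0
  | BStep.flip :: L => invF L
  | _ :: L => L.count BStep.flip + invF L

lemma invUD_swap (M1 M2 : List BStep) :
    invUD (M1 ++ down :: up :: M2) + 1 = invUD (M1 ++ up :: down :: M2) := by
  induction M1 with
  | nil => simp [invUD, List.count_cons]; ring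
  | cons s M1 ih =>
    have hc : List.count down (M1 ++ down :: up :: M2) =
        List.count down (M1 ++ up :: down :: M2) := by
      simp [List.count_append, List.count_cons]
    cases s <;> simp only [List.cons_append, invUD, List.append_eq] at ih hc ⊢ <;> omega

lemma invDU_swap (M1 M2 : List BStep) :
    invDU (M1 ++ up :: down :: M2) + 1 = invDU (M1 ++ down :: up :: M2) := by
  induction M1 with
  | nil => simp [invDU, List.count_cons]; ring
  | cons s M1 ih =>
    have hc : List.count up (M1 ++ up :: down :: M2) =
        List.count up (M1 ++ down :: up :: M2) := by
      simp [List.count_append, List.count_cons]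
    cases s <;> simp only [List.cons_append, invDU, List.append_eq] at ih hc ⊢ <;> omega

lemma invF_swap (s s' : BStep) (hs : s ≠ BStep.flip) (hs' : s' ≠ BStep.flip) (M1 M2 : List BStep) :
    invF (M1 ++ BStep.flip :: s' :: M2) + 1 = invF (M1 ++ s :: BStep.flip :: M2) := by
  induction M1 with
  | nil =>
    cases s with
    | flip => exact absurd rfl hs
    | up => cases s' with
      | flip => exact absurd rfl hs'
      | up => simp [invF, List.count_cons]; try omega
      | down => simp [invF, List.count_cons]; try omega
    | down => cases s' with
      | flip => exact absurd rfl hs'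
      | up => simp [invF, List.count_cons]; try omega
      | down => simp [invF, List.count_cons]; try omega
  | cons t M1 ih =>
    have hc : List.count BStep.flip (M1 ++ BStep.flip :: s' :: M2) =
        List.count BStep.flip (M1 ++ s :: BStep.flip :: M2) := by
      cases s <;> cases s' <;> simp_all [List.count_append, List.count_cons]
    cases t <;> simp only [List.cons_append, invF, List.append_eq] at ih hc ⊢ <;> omega

/-- `down^p up^q` words. -/
def DownUp (M : List BStep) : Prop :=
  ∃ p q : ℕ, M = List.replicate p down ++ List.replicate q up

/-- `up^q down^p` words. -/
def UpDown (M : List BStep) : Prop :=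
  ∃ p q : ℕ, M = List.replicate q up ++ List.replicate p down

lemma exists_ud {M : List BStep} (hf : ∀ s ∈ M, s ≠ BStep.flip) (hnd : ¬ DownUp M) :
    ∃ M1 M2, M = M1 ++ up :: down :: M2 := by
  induction M with
  | nil => exact absurd ⟨0, 0, rfl⟩ hnd
  | cons s M ih =>
    cases s with
    | flip => exact absurd rfl (hf BStep.flip (by simp))
    | down =>
      have hnd' : ¬ DownUp M := fun ⟨p, q, e⟩ =>
        hnd ⟨p + 1, q, by simp [e, List.replicate_succ]⟩
      obtain ⟨M1, M2, e⟩ := ih (fun s hs => hf s (by simp [hs])) hnd'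
      exact ⟨down :: M1, M2, by simp [e]⟩
    | up =>
      cases M with
      | nil => exact absurd ⟨0, 1, rfl⟩ hnd
      | cons s' M' =>
        cases s' with
        | flip => exact absurd rfl (hf BStep.flip (by simp))
        | down => exact ⟨[], M', rfl⟩
        | up =>
          have hnd' : ¬ DownUp (up :: M') := by
            rintro ⟨p, q, e⟩
            cases p with
            | succ p => simp [List.replicate_succ] at e
            | zero =>
              cases q with
              | zero => simp at e
              | succ q =>
                refine hnd ⟨0, q + 2, ?_⟩
                simp only [List.replicate_succ, List.nil_append] at e ⊢
                simp [e, List.replicate_succ]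
          obtain ⟨M1, M2, e⟩ := ih (fun s hs => hf s (by simp [hs])) hnd'
          exact ⟨up :: M1, M2, by simp [e]⟩

lemma exists_du {M : List BStep} (hf : ∀ s ∈ M, s ≠ BStep.flip) (hnd : ¬ UpDown M) :
    ∃ M1 M2, M = M1 ++ down :: up :: M2 := by
  induction M with
  | nil => exact absurd ⟨0, 0, rfl⟩ hnd
  | cons s M ih =>
    cases s with
    | flip => exact absurd rfl (hf BStep.flip (by simp))
    | up =>
      have hnd' : ¬ UpDown M := fun ⟨p, q, e⟩ =>
        hnd ⟨p, q + 1, by simp [e, List.replicate_succ]⟩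
      obtain ⟨M1, M2, e⟩ := ih (fun s hs => hf s (by simp [hs])) hnd'
      exact ⟨up :: M1, M2, by simp [e]⟩
    | down =>
      cases M with
      | nil => exact absurd ⟨1, 0, by simp⟩ hnd
      | cons s' M' =>
        cases s' with
        | flip => exact absurd rfl (hf BStep.flip (by simp))
        | up => exact ⟨[], M', rfl⟩
        | down =>
          have hnd' : ¬ UpDown (down :: M') := by
            rintro ⟨p, q, e⟩
            cases q with
            | succ q => simp [List.replicate_succ] at e
            | zero =>
              cases p with
              | zero => simp at e
              | succ p =>
                refine hnd ⟨p + 2, 0, ?_⟩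
                simp only [List.replicate_succ, List.nil_append, List.append_nil] at e ⊢
                simp [e, List.replicate_succ]
          obtain ⟨M1, M2, e⟩ := ih (fun s hs => hf s (by simp [hs])) hnd'
          exact ⟨down :: M1, M2, by simp [e]⟩

/-- BStep.flip-normal words: flips first, then no flips. -/
def FlipNF (L : List BStep) : Prop :=
  ∃ m M, L = List.replicate m BStep.flip ++ M ∧ ∀ s ∈ M, s ≠ BStep.flip

lemma exists_sf {L : List BStep} (hnf : ¬ FlipNF L) :
    ∃ L1 s L2, s ≠ BStep.flip ∧ L = L1 ++ s :: BStep.flip :: L2 := by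
  induction L with
  | nil => exact absurd ⟨0, [], rfl, by simp⟩ hnf
  | cons s L ih =>
    cases s with
    | flip =>
      have hnf' : ¬ FlipNF L := fun ⟨m, M, e, hM⟩ =>
        hnf ⟨m + 1, M, by simp [e, List.replicate_succ], hM⟩
      obtain ⟨L1, s, L2, hs, e⟩ := ih hnf'
      exact ⟨BStep.flip :: L1, s, L2, hs, by simp [e]⟩
    | up =>
      cases L with
      | nil => exact absurd ⟨0, [up], rfl, by simp⟩ hnf
      | cons s' L' =>
        cases s' with
        | flip => exact ⟨[], up, L', by simp, rfl⟩
        | up =>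
          have hnf' : ¬ FlipNF (up :: L') := by
            rintro ⟨m, M, e, hM⟩
            cases m with
            | succ m => simp [List.replicate_succ] at e
            | zero => exact hnf ⟨0, up :: up :: L', by simp [e], by
                intro s hs
                rcases List.mem_cons.1 hs with h | h
                · subst h; simp
                · rw [e] at h; exact hM s h⟩
          obtain ⟨L1, s, L2, hs, e⟩ := ih hnf'
          exact ⟨up :: L1, s, L2, hs, by simp [e]⟩
        | down =>
          have hnf' : ¬ FlipNF (down :: L') := by
            rintro ⟨m, M, e, hM⟩
            cases m with
            | succ m => simp [List.replicate_succ] at e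
            | zero => exact hnf ⟨0, up :: down :: L', by simp [e], by
                intro s hs
                rcases List.mem_cons.1 hs with h | h
                · subst h; simp
                · rw [e] at h; exact hM s h⟩
          obtain ⟨L1, s, L2, hs, e⟩ := ih hnf'
          exact ⟨up :: L1, s, L2, hs, by simp [e]⟩
    | down =>
      cases L with
      | nil => exact absurd ⟨0, [down], rfl, by simp⟩ hnf
      | cons s' L' =>
        cases s' with
        | flip => exact ⟨[], down, L', by simp, rfl⟩
        | up =>
          have hnf' : ¬ FlipNF (up :: L') := by
            rintro ⟨m, M, e, hM⟩
            cases m with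
            | succ m => simp [List.replicate_succ] at e
            | zero => exact hnf ⟨0, down :: up :: L', by simp [e], by
                intro s hs
                rcases List.mem_cons.1 hs with h | h
                · subst h; simp
                · rw [e] at h; exact hM s h⟩
          obtain ⟨L1, s, L2, hs, e⟩ := ih hnf'
          exact ⟨down :: L1, s, L2, hs, by simp [e]⟩
        | down =>
          have hnf' : ¬ FlipNF (down :: L') := by
            rintro ⟨m, M, e, hM⟩
            cases m with
            | succ m => simp [List.replicate_succ] at e
            | zero => exact hnf ⟨0, down :: down :: L', by simp [e], by
                intro s hs
                rcases List.mem_cons.1 hs with h | h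
                · subst h; simp
                · rw [e] at h; exact hM s h⟩
          obtain ⟨L1, s, L2, hs, e⟩ := ih hnf'
          exact ⟨down :: L1, s, L2, hs, by simp [e]⟩

end Measures
section Rewrite

open BStep

variable {F : Type*} [Field F] {N : ℕ} {i j : ℤ} {k : ℕ}

lemma targetY_pair (w : ℤ) (s t : BStep) :
    targetY N w [s, t] = stepNext N (stepNext N w s) t := rfl

lemma ok_mid {A M B : List BStep} (h : IsPathFromY N i j k (A ++ M ++ B)) :
    okStepsY N (targetY N i A) M := by
  have h1 := h.1
  rw [List.append_assoc, okStepsY_append] at h1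
  exact (okStepsY_append.1 h1.2).1

lemma xbot : ∀ (n : ℕ) (M A B : List BStep), invUD M = n →
    (∀ s ∈ M, s ≠ BStep.flip) → ∀ (h : IsPathFromY N i j k (A ++ M ++ B)),
    pathClassY F ⟨A ++ M ++ B, h⟩ = 0 ∨
    ∃ (M' : List BStep) (h' : IsPathFromY N i j k (A ++ M' ++ B)), DownUp M' ∧
      M'.length = M.length ∧
      targetY N (targetY N i A) M' = targetY N (targetY N i A) M ∧
      pathClassY F ⟨A ++ M ++ B, h⟩ = pathClassY F ⟨A ++ M' ++ B, h'⟩ := by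
  intro n
  induction n using Nat.strong_induction_on with
  | _ n ih =>
    intro M A B hn hff h
    by_cases hd : DownUp M
    · exact Or.inr ⟨M, h, hd, rfl, rfl, rfl⟩
    obtain ⟨M1, M2, rfl⟩ := exists_ud hff hd
    have e1 : A ++ (M1 ++ up :: down :: M2) ++ B = (A ++ M1) ++ [up, down] ++ (M2 ++ B) := by
      simp
    have h1 : IsPathFromY N i j k ((A ++ M1) ++ [up, down] ++ (M2 ++ B)) := e1 ▸ h
    set v := targetY N i (A ++ M1) with hv
    have hokm := ok_mid h1
    simp only [okStepsY, stepNext, ← hv] at hokm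
    have hc1 : pathClassY F ⟨A ++ (M1 ++ up :: down :: M2) ++ B, h⟩ =
        pathClassY F ⟨(A ++ M1) ++ [up, down] ++ (M2 ++ B), h1⟩ := cls_congr e1 h h1
    by_cases hv1 : v = 1
    · left
      rw [hc1]
      exact cls_rel_a1 hv1 h1
    · -- interior swap
      have hv2 : 2 ≤ v := by omega
      have hvN : v ≤ (N : ℤ) - 1 := by
        have := hokm.2.2.1
        omega
      have h2 : IsPathFromY N i j k ((A ++ M1) ++ [down, up] ++ (M2 ++ B)) := by
        refine replace_mid h1 ?_ ?_ ?_
        · simp only [okStepsY, stepNext, ← hv]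
          refine ⟨by omega, by omega, by omega, by omega, by omega, by omega⟩
        · simp only [targetY_pair, stepNext]; ring
        · rw [degY_cons, degY_cons, degY_cons, degY_cons]; rfl
      have hc2 : pathClassY F ⟨(A ++ M1) ++ [up, down] ++ (M2 ++ B), h1⟩ =
          pathClassY F ⟨(A ++ M1) ++ [down, up] ++ (M2 ++ B), h2⟩ :=
        (cls_rel_b hv2 hvN h2 h1).symm
      have e2 : (A ++ M1) ++ [down, up] ++ (M2 ++ B) = A ++ (M1 ++ down :: up :: M2) ++ B := by
        simp
      have h3 : IsPathFromY N i j k (A ++ (M1 ++ down :: up :: M2) ++ B) := e2 ▸ h2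
      have hc3 : pathClassY F ⟨(A ++ M1) ++ [down, up] ++ (M2 ++ B), h2⟩ =
          pathClassY F ⟨A ++ (M1 ++ down :: up :: M2) ++ B, h3⟩ := cls_congr e2 h2 h3
      have hmeas : invUD (M1 ++ down :: up :: M2) < n := by
        have := invUD_swap M1 M2
        omega
      have hff' : ∀ s ∈ M1 ++ down :: up :: M2, s ≠ BStep.flip := by
        intro s hs
        simp only [List.mem_append, List.mem_cons] at hs
        rcases hs with h' | h' | h' | h'
        · exact hff s (by simp [h'])
        · subst h'; simp
        · subst h'; simp
        · exact hff s (by simp [h'])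
      rcases ih _ hmeas (M1 ++ down :: up :: M2) A B rfl hff' h3 with h0 | ⟨M', h', hdu, hlen, htar, heq⟩
      · left
        rw [hc1, hc2, hc3, h0]
      · right
        refine ⟨M', h', hdu, ?_, ?_, by rw [hc1, hc2, hc3, heq]⟩
        · rw [hlen]; simp
        · rw [htar, targetY_append, targetY_append]
          show targetY N _ M2 = targetY N _ M2
          congr 1
          simp only [stepNext]
          ring
end Rewrite
section Rewrite2

open BStep

variable {F : Type*} [Field F] {N : ℕ} {i j : ℤ} {k : ℕ}

lemma xtop : ∀ (n : ℕ) (M A B : List BStep), invDU M = n →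
    (∀ s ∈ M, s ≠ BStep.flip) → ∀ (h : IsPathFromY N i j k (A ++ M ++ B)),
    pathClassY F ⟨A ++ M ++ B, h⟩ = 0 ∨
    ∃ (M' : List BStep) (h' : IsPathFromY N i j k (A ++ M' ++ B)), UpDown M' ∧
      M'.length = M.length ∧
      targetY N (targetY N i A) M' = targetY N (targetY N i A) M ∧
      pathClassY F ⟨A ++ M ++ B, h⟩ = pathClassY F ⟨A ++ M' ++ B, h'⟩ := by
  intro n
  induction n using Nat.strong_induction_on with
  | _ n ih =>
    intro M A B hn hff h
    by_cases hd : UpDown M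
    · exact Or.inr ⟨M, h, hd, rfl, rfl, rfl⟩
    obtain ⟨M1, M2, rfl⟩ := exists_du hff hd
    have e1 : A ++ (M1 ++ down :: up :: M2) ++ B = (A ++ M1) ++ [down, up] ++ (M2 ++ B) := by
      simp
    have h1 : IsPathFromY N i j k ((A ++ M1) ++ [down, up] ++ (M2 ++ B)) := e1 ▸ h
    set v := targetY N i (A ++ M1) with hv
    have hokm := ok_mid h1
    simp only [okStepsY, stepNext, ← hv] at hokm
    have hc1 : pathClassY F ⟨A ++ (M1 ++ down :: up :: M2) ++ B, h⟩ =
        pathClassY F ⟨(A ++ M1) ++ [down, up] ++ (M2 ++ B), h1⟩ := cls_congr e1 h h1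
    by_cases hv1 : v = (N : ℤ)
    · left
      rw [hc1]
      exact cls_rel_aN hv1 h1
    · have hvN : v ≤ (N : ℤ) - 1 := by
        have := hokm.2.1
        omega
      have hv2 : 2 ≤ v := by
        have := hokm.2.2.1
        omega
      have h2 : IsPathFromY N i j k ((A ++ M1) ++ [up, down] ++ (M2 ++ B)) := by
        refine replace_mid h1 ?_ ?_ ?_
        · simp only [okStepsY, stepNext, ← hv]
          refine ⟨by omega, by omega, by omega, by omega, by omega, by omega⟩
        · simp only [targetY_pair, stepNext]; ring
        · rw [degY_cons, degY_cons, degY_cons, degY_cons]; rfl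
      have hc2 : pathClassY F ⟨(A ++ M1) ++ [down, up] ++ (M2 ++ B), h1⟩ =
          pathClassY F ⟨(A ++ M1) ++ [up, down] ++ (M2 ++ B), h2⟩ :=
        cls_rel_b hv2 hvN h1 h2
      have e2 : (A ++ M1) ++ [up, down] ++ (M2 ++ B) = A ++ (M1 ++ up :: down :: M2) ++ B := by
        simp
      have h3 : IsPathFromY N i j k (A ++ (M1 ++ up :: down :: M2) ++ B) := e2 ▸ h2
      have hc3 : pathClassY F ⟨(A ++ M1) ++ [up, down] ++ (M2 ++ B), h2⟩ =
          pathClassY F ⟨A ++ (M1 ++ up :: down :: M2) ++ B, h3⟩ := cls_congr e2 h2 h3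
      have hmeas : invDU (M1 ++ up :: down :: M2) < n := by
        have := invDU_swap M1 M2
        omega
      have hff' : ∀ s ∈ M1 ++ up :: down :: M2, s ≠ BStep.flip := by
        intro s hs
        simp only [List.mem_append, List.mem_cons] at hs
        rcases hs with h' | h' | h' | h'
        · exact hff s (by simp [h'])
        · subst h'; simp
        · subst h'; simp
        · exact hff s (by simp [h'])
      rcases ih _ hmeas (M1 ++ up :: down :: M2) A B rfl hff' h3 with h0 | ⟨M', h', hdu, hlen, htar, heq⟩
      · left
        rw [hc1, hc2, hc3, h0]
      · right
        refine ⟨M', h', hdu, ?_, ?_, by rw [hc1, hc2, hc3, heq]⟩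
        · rw [hlen]; simp
        · rw [htar, targetY_append, targetY_append]
          show targetY N _ M2 = targetY N _ M2
          congr 1
          simp only [stepNext]
          ring
end Rewrite2
section Rewrite3

open BStep

variable {F : Type*} [Field F] {N : ℕ} {i j : ℤ} {k : ℕ}

lemma flipleft : ∀ (n : ℕ) (L A B : List BStep), invF L = n →
    ∀ (h : IsPathFromY N i j k (A ++ L ++ B)),
    ∃ (m : ℕ) (M : List BStep)
      (h' : IsPathFromY N i j k (A ++ (List.replicate m flip ++ M) ++ B)),
      (∀ s ∈ M, s ≠ BStep.flip) ∧
      pathClassY F ⟨A ++ L ++ B, h⟩ =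
        pathClassY F ⟨A ++ (List.replicate m flip ++ M) ++ B, h'⟩ := by
  intro n
  induction n using Nat.strong_induction_on with
  | _ n ih =>
    intro L A B hn h
    by_cases hd : FlipNF L
    · obtain ⟨m, M, e, hM⟩ := hd
      have h' : IsPathFromY N i j k (A ++ (List.replicate m flip ++ M) ++ B) := by
        rwa [e] at h
      exact ⟨m, M, h', hM, cls_congr (by rw [e]) h h'⟩
    obtain ⟨L1, s, L2, hs, rfl⟩ := exists_sf hd
    have e1 : A ++ (L1 ++ s :: flip :: L2) ++ B = (A ++ L1) ++ [s, flip] ++ (L2 ++ B) := by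
      simp
    have h1 : IsPathFromY N i j k ((A ++ L1) ++ [s, flip] ++ (L2 ++ B)) := e1 ▸ h
    set v := targetY N i (A ++ L1) with hv
    have hokm := ok_mid h1
    have hc1 : pathClassY F ⟨A ++ (L1 ++ s :: flip :: L2) ++ B, h⟩ =
        pathClassY F ⟨(A ++ L1) ++ [s, flip] ++ (L2 ++ B), h1⟩ := cls_congr e1 h h1
    -- produce the swapped form [flip, s'] with s' the reflected step
    have key : ∃ (s' : BStep) (_ : s' ≠ BStep.flip)
        (h2 : IsPathFromY N i j k ((A ++ L1) ++ [flip, s'] ++ (L2 ++ B))),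
        pathClassY F ⟨(A ++ L1) ++ [s, flip] ++ (L2 ++ B), h1⟩ =
          pathClassY F ⟨(A ++ L1) ++ [flip, s'] ++ (L2 ++ B), h2⟩ := by
      cases s with
      | flip => exact absurd rfl hs
      | up =>
        simp only [okStepsY, stepNext, ← hv] at hokm
        have h2 : IsPathFromY N i j k ((A ++ L1) ++ [flip, down] ++ (L2 ++ B)) := by
          refine replace_mid h1 ?_ ?_ ?_
          · simp only [okStepsY, stepNext, ← hv]
            refine ⟨by omega, by omega, by omega, by omega, by omega, by omega⟩
          · simp only [targetY_pair, stepNext]; ring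
          · rw [degY_cons, degY_cons, degY_cons, degY_cons]
            simp [stepDeg]; omega
        exact ⟨down, by simp, h2, cls_rel_c (by omega) (by omega) h1 h2⟩
      | down =>
        simp only [okStepsY, stepNext, ← hv] at hokm
        have h2 : IsPathFromY N i j k ((A ++ L1) ++ [flip, up] ++ (L2 ++ B)) := by
          refine replace_mid h1 ?_ ?_ ?_
          · simp only [okStepsY, stepNext, ← hv]
            refine ⟨by omega, by omega, by omega, by omega, by omega, by omega⟩
          · simp only [targetY_pair, stepNext]; ring
          · rw [degY_cons, degY_cons, degY_cons, degY_cons]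
            simp [stepDeg]; omega
        exact ⟨up, by simp, h2, cls_rel_d (by omega) (by omega) h1 h2⟩
    obtain ⟨s', hs', h2, hc2⟩ := key
    have e2 : (A ++ L1) ++ [flip, s'] ++ (L2 ++ B) = A ++ (L1 ++ flip :: s' :: L2) ++ B := by
      simp
    have h3 : IsPathFromY N i j k (A ++ (L1 ++ flip :: s' :: L2) ++ B) := e2 ▸ h2
    have hc3 : pathClassY F ⟨(A ++ L1) ++ [flip, s'] ++ (L2 ++ B), h2⟩ =
        pathClassY F ⟨A ++ (L1 ++ flip :: s' :: L2) ++ B, h3⟩ := cls_congr e2 h2 h3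
    have hmeas : invF (L1 ++ flip :: s' :: L2) < n := by
      have := invF_swap s s' hs hs' L1 L2
      omega
    obtain ⟨m, M, h', hM, heq⟩ := ih _ hmeas (L1 ++ flip :: s' :: L2) A B rfl h3
    exact ⟨m, M, h', hM, by rw [hc1, hc2, hc3, heq]⟩

end Rewrite3
section Rewrite4

open BStep

variable {F : Type*} [Field F] {N : ℕ} {i j : ℤ} {k : ℕ}

lemma pair_move (A B : List BStep) (s : BStep) (hs : s ≠ BStep.flip)
    (h : IsPathFromY N i j k (A ++ [flip, flip, s] ++ B)) :
    ∃ h' : IsPathFromY N i j k (A ++ [s, flip, flip] ++ B),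
      pathClassY F ⟨A ++ [flip, flip, s] ++ B, h⟩ =
        pathClassY F ⟨A ++ [s, flip, flip] ++ B, h'⟩ := by
  set v := targetY N i A with hv
  have hokm := ok_mid h
  have htA1 : targetY N i (A ++ [flip]) = (N : ℤ) + 1 - v := by
    rw [targetY_append, ← hv]; rfl
  cases s with
  | flip => exact absurd rfl hs
  | up =>
    simp only [okStepsY, stepNext, ← hv] at hokm
    have e1 : A ++ [flip, flip, up] ++ B = (A ++ [flip]) ++ [flip, up] ++ B := by simp
    have h1 : IsPathFromY N i j k ((A ++ [flip]) ++ [flip, up] ++ B) := e1 ▸ h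
    have h2 : IsPathFromY N i j k ((A ++ [flip]) ++ [down, flip] ++ B) := by
      refine replace_mid h1 ?_ ?_ ?_
      · simp only [okStepsY, stepNext, htA1]
        refine ⟨by omega, by omega, by omega, by omega, by omega, by omega⟩
      · simp only [targetY_pair, stepNext, htA1]; ring
      · rw [degY_cons, degY_cons, degY_cons, degY_cons]; simp [stepDeg]; omega
    have hc2 : pathClassY F ⟨(A ++ [flip]) ++ [flip, up] ++ B, h1⟩ =
        pathClassY F ⟨(A ++ [flip]) ++ [down, flip] ++ B, h2⟩ :=
      (cls_rel_d (by rw [htA1]; omega) (by rw [htA1]; omega) h2 h1).symm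
    have e2 : (A ++ [flip]) ++ [down, flip] ++ B = A ++ [flip, down] ++ (flip :: B) := by simp
    have h3 : IsPathFromY N i j k (A ++ [flip, down] ++ (flip :: B)) := e2 ▸ h2
    have h4 : IsPathFromY N i j k (A ++ [up, flip] ++ (flip :: B)) := by
      refine replace_mid h3 ?_ ?_ ?_
      · simp only [okStepsY, stepNext, ← hv]
        refine ⟨by omega, by omega, by omega, by omega, by omega, by omega⟩
      · simp only [targetY_pair, stepNext, ← hv]; ring
      · rw [degY_cons, degY_cons, degY_cons, degY_cons]; simp [stepDeg]; omega
    have hc4 : pathClassY F ⟨A ++ [flip, down] ++ (flip :: B), h3⟩ =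
        pathClassY F ⟨A ++ [up, flip] ++ (flip :: B), h4⟩ :=
      (cls_rel_c (by omega) (by omega) h4 h3).symm
    have e3 : A ++ [up, flip] ++ (flip :: B) = A ++ [up, flip, flip] ++ B := by simp
    have h5 : IsPathFromY N i j k (A ++ [up, flip, flip] ++ B) := e3 ▸ h4
    exact ⟨h5, by
      rw [cls_congr e1 h h1, hc2, cls_congr e2 h2 h3, hc4, cls_congr e3 h4 h5]⟩
  | down =>
    simp only [okStepsY, stepNext, ← hv] at hokm
    have e1 : A ++ [flip, flip, down] ++ B = (A ++ [flip]) ++ [flip, down] ++ B := by simp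
    have h1 : IsPathFromY N i j k ((A ++ [flip]) ++ [flip, down] ++ B) := e1 ▸ h
    have h2 : IsPathFromY N i j k ((A ++ [flip]) ++ [up, flip] ++ B) := by
      refine replace_mid h1 ?_ ?_ ?_
      · simp only [okStepsY, stepNext, htA1]
        refine ⟨by omega, by omega, by omega, by omega, by omega, by omega⟩
      · simp only [targetY_pair, stepNext, htA1]; ring
      · rw [degY_cons, degY_cons, degY_cons, degY_cons]; simp [stepDeg]; omega
    have hc2 : pathClassY F ⟨(A ++ [flip]) ++ [flip, down] ++ B, h1⟩ =
        pathClassY F ⟨(A ++ [flip]) ++ [up, flip] ++ B, h2⟩ :=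
      (cls_rel_c (by rw [htA1]; omega) (by rw [htA1]; omega) h2 h1).symm
    have e2 : (A ++ [flip]) ++ [up, flip] ++ B = A ++ [flip, up] ++ (flip :: B) := by simp
    have h3 : IsPathFromY N i j k (A ++ [flip, up] ++ (flip :: B)) := e2 ▸ h2
    have h4 : IsPathFromY N i j k (A ++ [down, flip] ++ (flip :: B)) := by
      refine replace_mid h3 ?_ ?_ ?_
      · simp only [okStepsY, stepNext, ← hv]
        refine ⟨by omega, by omega, by omega, by omega, by omega, by omega⟩
      · simp only [targetY_pair, stepNext, ← hv]; ring
      · rw [degY_cons, degY_cons, degY_cons, degY_cons]; simp [stepDeg]; omega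
    have hc4 : pathClassY F ⟨A ++ [flip, up] ++ (flip :: B), h3⟩ =
        pathClassY F ⟨A ++ [down, flip] ++ (flip :: B), h4⟩ :=
      (cls_rel_d (by omega) (by omega) h4 h3).symm
    have e3 : A ++ [down, flip] ++ (flip :: B) = A ++ [down, flip, flip] ++ B := by simp
    have h5 : IsPathFromY N i j k (A ++ [down, flip, flip] ++ B) := e3 ▸ h4
    exact ⟨h5, by
      rw [cls_congr e1 h h1, hc2, cls_congr e2 h2 h3, hc4, cls_congr e3 h4 h5]⟩

lemma move_pair_block : ∀ (M : List BStep) (A B : List BStep), (∀ s ∈ M, s ≠ BStep.flip) →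
    ∀ (h : IsPathFromY N i j k (A ++ ([flip, flip] ++ M) ++ B)),
    ∃ h' : IsPathFromY N i j k (A ++ (M ++ [flip, flip]) ++ B),
      pathClassY F ⟨A ++ ([flip, flip] ++ M) ++ B, h⟩ =
        pathClassY F ⟨A ++ (M ++ [flip, flip]) ++ B, h'⟩ := by
  intro M
  induction M with
  | nil => exact fun A B _ h => ⟨h, rfl⟩
  | cons s M ihM =>
    intro A B hff h
    have e1 : A ++ ([flip, flip] ++ s :: M) ++ B = A ++ [flip, flip, s] ++ (M ++ B) := by simp
    have h1 : IsPathFromY N i j k (A ++ [flip, flip, s] ++ (M ++ B)) := e1 ▸ h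
    obtain ⟨h2, hc2⟩ := pair_move (F := F) A (M ++ B) s (hff s (by simp)) h1
    have e2 : A ++ [s, flip, flip] ++ (M ++ B) = (A ++ [s]) ++ ([flip, flip] ++ M) ++ B := by
      simp
    have h3 : IsPathFromY N i j k ((A ++ [s]) ++ ([flip, flip] ++ M) ++ B) := e2 ▸ h2
    obtain ⟨h4, hc4⟩ := ihM (A ++ [s]) B (fun t ht => hff t (by simp [ht])) h3
    have e3 : (A ++ [s]) ++ (M ++ [flip, flip]) ++ B = A ++ (s :: M ++ [flip, flip]) ++ B := by
      simp
    have h5 : IsPathFromY N i j k (A ++ (s :: M ++ [flip, flip]) ++ B) := e3 ▸ h4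
    exact ⟨h5, by
      rw [cls_congr e1 h h1, hc2, cls_congr e2 h2 h3, hc4, cls_congr e3 h4 h5]⟩

lemma shift_pairs : ∀ (t : ℕ) (M A B : List BStep), (∀ s ∈ M, s ≠ BStep.flip) →
    ∀ (h : IsPathFromY N i j k (A ++ (List.replicate (2 * t) flip ++ M) ++ B)),
    ∃ h' : IsPathFromY N i j k (A ++ (M ++ List.replicate (2 * t) flip) ++ B),
      pathClassY F ⟨A ++ (List.replicate (2 * t) flip ++ M) ++ B, h⟩ =
        pathClassY F ⟨A ++ (M ++ List.replicate (2 * t) flip) ++ B, h'⟩ := by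
  intro t
  induction t with
  | zero =>
    intro M A B _ h
    have e : A ++ (List.replicate (2 * 0) flip ++ M) ++ B
        = A ++ (M ++ List.replicate (2 * 0) flip) ++ B := by simp
    have h' : IsPathFromY N i j k (A ++ (M ++ List.replicate (2 * 0) flip) ++ B) := e ▸ h
    exact ⟨h', cls_congr e h h'⟩
  | succ t iht =>
    intro M A B hff h
    have erep : List.replicate (2 * (t + 1)) flip
        = flip :: flip :: List.replicate (2 * t) flip := by
      rw [show 2 * (t + 1) = 2 + 2 * t by ring, List.replicate_add]
      rfl
    have e1 : A ++ (List.replicate (2 * (t + 1)) flip ++ M) ++ B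
        = (A ++ [flip, flip]) ++ (List.replicate (2 * t) flip ++ M) ++ B := by
      rw [erep]; simp
    have h1 : IsPathFromY N i j k ((A ++ [flip, flip]) ++ (List.replicate (2 * t) flip ++ M) ++ B) := e1 ▸ h
    obtain ⟨h2, hc2⟩ := iht M (A ++ [flip, flip]) B hff h1
    have e2 : (A ++ [flip, flip]) ++ (M ++ List.replicate (2 * t) flip) ++ B
        = A ++ ([flip, flip] ++ M) ++ (List.replicate (2 * t) flip ++ B) := by simp
    have h3 : IsPathFromY N i j k (A ++ ([flip, flip] ++ M) ++ (List.replicate (2 * t) flip ++ B)) := e2 ▸ h2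
    obtain ⟨h4, hc4⟩ := move_pair_block (F := F) M A (List.replicate (2 * t) flip ++ B) hff h3
    have e3 : A ++ (M ++ [flip, flip]) ++ (List.replicate (2 * t) flip ++ B)
        = A ++ (M ++ List.replicate (2 * (t + 1)) flip) ++ B := by
      rw [erep]; simp
    have h5 : IsPathFromY N i j k (A ++ (M ++ List.replicate (2 * (t + 1)) flip) ++ B) := e3 ▸ h4
    exact ⟨h5, by
      rw [cls_congr e1 h h1, hc2, cls_congr e2 h2 h3, hc4, cls_congr e3 h4 h5]⟩

end Rewrite4
section Arith

open BStep

variable {N : ℕ}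

lemma targetY_replicate_down (a : ℤ) (p : ℕ) :
    targetY N a (List.replicate p down) = a - p := by
  induction p generalizing a with
  | zero => simp [targetY]
  | succ p ih =>
    rw [List.replicate_succ]
    show targetY N (a - 1) (List.replicate p down) = a - (p + 1)
    rw [ih]; ring

lemma targetY_replicate_up (a : ℤ) (q : ℕ) :
    targetY N a (List.replicate q up) = a + q := by
  induction q generalizing a with
  | zero => simp [targetY]
  | succ q ih =>
    rw [List.replicate_succ]
    show targetY N (a + 1) (List.replicate q up) = a + (q + 1)
    rw [ih]; ring

lemma targetY_replicate_flip2 (a : ℤ) (t : ℕ) :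
    targetY N a (List.replicate (2 * t) flip) = a := by
  induction t generalizing a with
  | zero => simp [targetY]
  | succ t ih =>
    rw [show 2 * (t + 1) = 2 + 2 * t by ring, List.replicate_add]
    show targetY N (stepNext N (stepNext N a flip) flip) (List.replicate (2 * t) flip) = a
    rw [show stepNext N (stepNext N a flip) flip = a by simp [stepNext]]
    exact ih a

lemma degY_replicate_flip (m : ℕ) : degY N (List.replicate m flip) = m * N := by
  simp [degY, stepDeg]

lemma degY_flipfree {M : List BStep} (hM : ∀ s ∈ M, s ≠ BStep.flip) :
    degY N M = M.length := by
  induction M with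
  | nil => rfl
  | cons s M ih =>
    rw [degY_cons, ih (fun t ht => hM t (by simp [ht])), List.length_cons]
    have := hM s (by simp)
    cases s with
    | up => simp [stepDeg]; omega
    | down => simp [stepDeg]; omega
    | flip => exact absurd rfl this

lemma ok_downup_low {a : ℤ} {p q : ℕ}
    (h : okStepsY N a (List.replicate p down ++ List.replicate q up)) :
    1 ≤ a - p ∧ a ≤ (N : ℤ) := by
  have h1 := okStepsY_append.1 h
  have h2 := okStepsY_target h1.1
  rw [targetY_replicate_down] at h2
  exact ⟨h2.1, (okStepsY_bounds h1.1).2⟩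

lemma ok_updown_high {a : ℤ} {p q : ℕ}
    (h : okStepsY N a (List.replicate q up ++ List.replicate p down)) :
    a + q ≤ (N : ℤ) := by
  have h1 := okStepsY_append.1 h
  have h2 := okStepsY_target h1.1
  rw [targetY_replicate_up] at h2
  exact h2.2

end Arith

open BStep in
/-- The canonical vertex where the `x`-part of a canonical path starts. -/
def canonA (N : ℕ) (i : ℤ) (k : ℕ) : ℤ := if (k / N) % 2 = 1 then (N : ℤ) + 1 - i else i

open BStep in
/-- The canonical path from `i` to `j` of degree `k`. -/
def canonList (N : ℕ) (i j : ℤ) (k : ℕ) : List BStep :=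
  List.replicate ((k / N) % 2) flip ++
    (List.replicate ((((k % N : ℕ) : ℤ) + canonA N i k - j) / 2).toNat down ++
      List.replicate ((((k % N : ℕ) : ℤ) + j - canonA N i k) / 2).toNat up) ++
    List.replicate (2 * (k / N / 2)) flip

/-- The necessary condition for nonvanishing. -/
def CondY (N : ℕ) (i j : ℤ) (k : ℕ) : Prop :=
  (Even (k / N) ∧
      |i - j| ≤ ((k % N : ℕ) : ℤ) ∧
      ((k % N : ℕ) : ℤ) ≤ (N : ℤ) - 1 - |(N : ℤ) + 1 - i - j| ∧
      ((k % N : ℕ) : ℤ) % 2 = (i - j) % 2) ∨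
    (¬ Even (k / N) ∧
      |((N : ℤ) + 1 - i) - j| ≤ ((k % N : ℕ) : ℤ) ∧
      ((k % N : ℕ) : ℤ) ≤ (N : ℤ) - 1 - |(N : ℤ) + 1 - ((N : ℤ) + 1 - i) - j| ∧
      ((k % N : ℕ) : ℤ) % 2 = (((N : ℤ) + 1 - i) - j) % 2)
open BStep in
lemma mainY (F : Type*) [Field F] {N : ℕ} (hN : 2 ≤ N) {i j : ℤ} {k : ℕ}
    (L : List BStep) (h : IsPathFromY N i j k L) :
    pathClassY F ⟨L, h⟩ = 0 ∨
    (CondY N i j k ∧ ∃ h' : IsPathFromY N i j k (canonList N i j k),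
      pathClassY F ⟨L, h⟩ = pathClassY F ⟨canonList N i j k, h'⟩) := by
  have e0 : L = [] ++ L ++ [] := by simp
  have h0 : IsPathFromY N i j k ([] ++ L ++ []) := e0 ▸ h
  have hc0 := cls_congr (F := F) e0 h h0
  obtain ⟨m, M, h1, hM, hc1⟩ := flipleft (F := F) (invF L) L [] [] rfl h0
  obtain ⟨ε, t, hε01, rfl⟩ : ∃ ε t, (ε = 0 ∨ ε = 1) ∧ m = ε + 2 * t :=
    ⟨m % 2, m / 2, Nat.mod_two_eq_zero_or_one m, by omega⟩
  have e2 : [] ++ (List.replicate (ε + 2 * t) flip ++ M) ++ [] =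
      List.replicate ε flip ++ (List.replicate (2 * t) flip ++ M) ++ [] := by
    simp only [List.nil_append, List.append_nil, List.replicate_add, List.append_assoc]
  have h2 : IsPathFromY N i j k
      (List.replicate ε flip ++ (List.replicate (2 * t) flip ++ M) ++ []) := e2 ▸ h1
  have hc2 := cls_congr (F := F) e2 h1 h2
  obtain ⟨h3, hc3⟩ := shift_pairs (F := F) t M (List.replicate ε flip) [] hM h2
  have e4 : List.replicate ε flip ++ (M ++ List.replicate (2 * t) flip) ++ [] =
      List.replicate ε flip ++ M ++ List.replicate (2 * t) flip := by simp
  have h4 : IsPathFromY N i j k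
      (List.replicate ε flip ++ M ++ List.replicate (2 * t) flip) := e4 ▸ h3
  have hc4 := cls_congr (F := F) e4 h3 h4
  rcases xbot (F := F) (invUD M) M (List.replicate ε flip) (List.replicate (2 * t) flip)
      rfl hM h4 with h5z | ⟨M', h5, hdu, hlen, htar, hc5⟩
  · left; rw [hc0, hc1, hc2, hc3, hc4, h5z]
  have hffM' : ∀ s ∈ M', s ≠ BStep.flip := by
    obtain ⟨p, q, rfl⟩ := hdu
    intro s hs
    simp only [List.mem_append, List.mem_replicate] at hs
    rcases hs with ⟨_, rfl⟩ | ⟨_, rfl⟩ <;> simp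
  rcases xtop (F := F) (invDU M') M' (List.replicate ε flip) (List.replicate (2 * t) flip)
      rfl hffM' h5 with h6z | ⟨M'', h6, hud, hlen2, htar2, _⟩
  · left; rw [hc0, hc1, hc2, hc3, hc4, hc5, h6z]
  obtain ⟨p, q, rfl⟩ := hdu
  obtain ⟨p2, q2, rfl⟩ := hud
  set a := targetY N i (List.replicate ε flip) with ha
  have hNpos : 0 < N := by omega
  have hok5 := ok_mid h5
  rw [← ha] at hok5
  have hlow := ok_downup_low hok5
  have ha1 : 1 ≤ a := (okStepsY_bounds hok5).1
  have hok6 := ok_mid h6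
  rw [← ha] at hok6
  have hhigh := ok_updown_high hok6
  have htj : a - p + q = j := by
    have h' := h5.2.1
    rw [List.append_assoc, targetY_append, targetY_append, ← ha, targetY_append,
      targetY_replicate_down, targetY_replicate_up, targetY_replicate_flip2] at h'
    linarith [h']
  have hlq : q2 + p2 = p + q := by
    have h' := hlen2
    simp only [List.length_append, List.length_replicate] at h'
    omega
  have htq : a + q2 - p2 = a - p + q := by
    have h' := htar2
    rw [targetY_append, targetY_append, targetY_replicate_down, targetY_replicate_up,
      targetY_replicate_up, targetY_replicate_down] at h'
    linarith [h']
  have hr2 : ((p : ℤ) + q) ≤ 2 * (N : ℤ) - a - j := by omega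
  have hr1 : ((p : ℤ) + q) ≤ a + j - 2 := by omega
  have hrNn : p + q < N := by omega
  have hdeg : ε * N + (p + q) + 2 * t * N = k := by
    have h' := h5.2.2
    rw [List.append_assoc, degY_append, degY_append, degY_replicate_flip,
      degY_replicate_flip, degY_flipfree hffM'] at h'
    simp only [List.length_append, List.length_replicate] at h'
    omega
  have hk : k = (p + q) + (ε + 2 * t) * N := by rw [← hdeg]; ring
  have hkmod : k % N = p + q := by
    rw [hk, Nat.add_mul_mod_self_right]
    exact Nat.mod_eq_of_lt hrNn
  have hkdiv : k / N = ε + 2 * t := by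
    rw [hk, Nat.add_mul_div_right _ _ hNpos, Nat.div_eq_of_lt hrNn, Nat.zero_add]
  have haval : a = canonA N i k := by
    rw [canonA, hkdiv]
    rcases hε01 with h' | h' <;> rw [h'] at ha ⊢
    · rw [if_neg (by omega)]; rw [ha]; rfl
    · rw [if_pos (by omega)]; rw [ha]; rfl
  rw [haval] at htj hlow ha1 hhigh hr1 hr2
  have hp2 : ((k % N : ℕ) : ℤ) + canonA N i k - j = 2 * p := by
    rw [hkmod]; push_cast; omega
  have hq2 : ((k % N : ℕ) : ℤ) + j - canonA N i k = 2 * q := by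
    rw [hkmod]; push_cast; omega
  have hpp : ((((k % N : ℕ) : ℤ) + canonA N i k - j) / 2).toNat = p := by
    rw [hp2, Int.mul_ediv_cancel_left (p : ℤ) two_ne_zero]
    exact Int.toNat_natCast p
  have hqq : ((((k % N : ℕ) : ℤ) + j - canonA N i k) / 2).toNat = q := by
    rw [hq2, Int.mul_ediv_cancel_left (q : ℤ) two_ne_zero]
    exact Int.toNat_natCast q
  have hee : (k / N) % 2 = ε := by omega
  have htt2 : k / N / 2 = t := by omega
  have ecanon : List.replicate ε flip ++ (List.replicate p down ++ List.replicate q up) ++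
      List.replicate (2 * t) flip = canonList N i j k := by
    rw [canonList, hpp, hqq, hee, htt2]
  have hcanon : IsPathFromY N i j k (canonList N i j k) := ecanon ▸ h5
  refine Or.inr ⟨?_, hcanon, by
    rw [hc0, hc1, hc2, hc3, hc4, hc5, cls_congr ecanon h5 hcanon]⟩
  rw [CondY]
  rcases hε01 with h' | h'
  · left
    have hev : Even (k / N) := by rw [hkdiv, h']; exact ⟨t, by ring⟩
    have hai : canonA N i k = i := by rw [canonA, hkdiv, h', if_neg (by omega)]
    rw [hai] at htj hlow hr1 hr2
    refine ⟨hev, ?_, ?_, ?_⟩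
    · rw [abs_le, hkmod]; push_cast; omega
    · rcases abs_cases ((N : ℤ) + 1 - i - j) with ⟨he, _⟩ | ⟨he, _⟩ <;>
        rw [he, hkmod] <;> push_cast <;> omega
    · rw [hkmod]; push_cast; omega
  · right
    have hev : ¬ Even (k / N) := by
      rw [hkdiv, h', Nat.even_iff]; omega
    have hai : canonA N i k = (N : ℤ) + 1 - i := by rw [canonA, hkdiv, h', if_pos (by omega)]
    rw [hai] at htj hlow hr1 hr2
    refine ⟨hev, ?_, ?_, ?_⟩
    · rw [abs_le, hkmod]; push_cast; omega
    · rcases abs_cases ((N : ℤ) + 1 - ((N : ℤ) + 1 - i) - j) with ⟨he, _⟩ | ⟨he, _⟩ <;>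
        rw [he, hkmod] <;> push_cast <;> omega
    · rw [hkmod]; push_cast; omega
lemma spanY (F : Type*) [Field F] {N : ℕ} (hN : 2 ≤ N) {i j : ℤ} {k : ℕ} :
    ∃ v : PathCompY F N i j k,
      (CondY N i j k ∨ v = 0) ∧ ∀ w : PathCompY F N i j k, ∃ c : F, c • v = w := by
  classical
  have key : ∀ (v : PathCompY F N i j k),
      (∀ p : PathIdxY N i j k, pathClassY F p ∈ Submodule.span F {v}) →
      ∀ w : PathCompY F N i j k, ∃ c : F, c • v = w := by
    intro v hv w
    rw [← Submodule.mem_span_singleton]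
    obtain ⟨f, rfl⟩ := Submodule.Quotient.mk_surjective _ w
    induction f using Finsupp.induction_linear with
    | zero => exact Submodule.zero_mem _
    | add f g hf hg =>
      have : (Submodule.Quotient.mk (f + g) : PathCompY F N i j k)
          = Submodule.Quotient.mk f + Submodule.Quotient.mk g := rfl
      rw [this]
      exact Submodule.add_mem _ hf hg
    | single a b =>
      have e : Finsupp.single a b = b • Finsupp.single a (1 : F) := by
        rw [Finsupp.smul_single', mul_one]
      have : (Submodule.Quotient.mk (Finsupp.single a b) : PathCompY F N i j k)
          = b • pathClassY F a := by
        rw [e]; unfold pathClassY; rfl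
      rw [this]
      exact Submodule.smul_mem _ _ (hv a)
  by_cases hC : IsPathFromY N i j k (canonList N i j k) ∧ CondY N i j k
  · refine ⟨pathClassY F ⟨canonList N i j k, hC.1⟩, Or.inl hC.2, key _ ?_⟩
    intro p
    obtain ⟨Lp, hLp⟩ := p
    rcases mainY F hN Lp hLp with h0 | ⟨_, h', heq⟩
    · rw [h0]; exact Submodule.zero_mem _
    · rw [heq]
      exact Submodule.mem_span_singleton_self _
  · refine ⟨0, Or.inr rfl, key _ ?_⟩
    intro p
    obtain ⟨Lp, hLp⟩ := p
    rcases mainY F hN Lp hLp with h0 | ⟨hcond, h', heq⟩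
    · rw [h0]; exact Submodule.zero_mem _
    · exact absurd ⟨h', hcond⟩ hC
/-- `dim_F e_i Γ_k e_j ≤ 1`, and it equals `1` only if, writing `k = qN + r` with
`0 ≤ r < N`, either `q` is even and `|i−j| ≤ r ≤ N−1−|N+1−i−j|` with
`r ≡ i−j (mod 2)`, or `q` is odd and the same condition holds with `i` replaced by
`N+1−i`. -/
theorem stmt12 (F : Type*) [Field F] (N : ℕ) (hN : 2 ≤ N) (i j : ℤ)
    (hi : 1 ≤ i) (hiN : i ≤ (N : ℤ)) (hj : 1 ≤ j) (hjN : j ≤ (N : ℤ)) (k : ℕ) :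
    Module.finrank F (PathCompY F N i j k) ≤ 1 ∧
    (Module.finrank F (PathCompY F N i j k) = 1 →
      ((Even (k / N) ∧
          |i - j| ≤ ((k % N : ℕ) : ℤ) ∧
          ((k % N : ℕ) : ℤ) ≤ (N : ℤ) - 1 - |(N : ℤ) + 1 - i - j| ∧
          ((k % N : ℕ) : ℤ) % 2 = (i - j) % 2) ∨
        (¬ Even (k / N) ∧
          |((N : ℤ) + 1 - i) - j| ≤ ((k % N : ℕ) : ℤ) ∧
          ((k % N : ℕ) : ℤ) ≤ (N : ℤ) - 1 - |(N : ℤ) + 1 - ((N : ℤ) + 1 - i) - j| ∧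
          ((k % N : ℕ) : ℤ) % 2 = (((N : ℤ) + 1 - i) - j) % 2))) := by
  obtain ⟨v, hcv, hv⟩ := spanY F hN (i := i) (j := j) (k := k)
  constructor
  · exact finrank_le_one v hv
  · intro hfr
    rcases hcv with hcond | rfl
    · rw [CondY] at hcond
      exact hcond
    · exfalso
      have hsub : ∀ w : PathCompY F N i j k, w = 0 := by
        intro w
        obtain ⟨c, rfl⟩ := hv w
        simp
      haveI : Subsingleton (PathCompY F N i j k) :=
        subsingleton_of_forall_eq 0 hsub
      rw [Module.finrank_zero_of_subsingleton] at hfr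
      exact absurd hfr (by norm_num)
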